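/- For any lattice path x ∈ L_{2k,k} \ D_{2k}^k, the position flipped by h applied to g(x) is strictly smaller than the position flipped by g applied to x, and neither x nor g(x) has a U-step touching the line y=1 at any position strictly between these two positions. -/

import Mathlib

/-- Value of a step: `true` = U-step (+1), `false` = D-step (-1). -/
def stepVal (b : Bool) : ℤ := if b then 1 else -1

/-- Height of the lattice path `x` after its first `i` steps. -/
def pathHeight (x : List Bool) (i : ℕ) : ℤ := ((x.take i).map stepVal).sum

/-- The step at position `i` (0-indexed) is a U-step. -/
def isU (x : List Bool) (i : ℕ) : Bool := x.getD i true

/-- The step at position `i` (0-indexed) is a D-step. -/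
def isD (x : List Bool) (i : ℕ) : Bool := !(x.getD i true)

/-- Number of flaws: D-steps lying below the line y=0 (i.e. starting at height ≤ 0). -/
def flaws (x : List Bool) : ℕ :=
  ((List.range x.length).filter (fun i => isD x i && decide (pathHeight x i ≤ 0))).length

/-- `DyckSet k e` = the set `D_{2k}^e` of Dyck paths with `2k` steps and `e` flaws. -/
def DyckSet (k e : ℕ) : Set (List Bool) :=
  {x | x.length = 2*k ∧ x.count true = k ∧ flaws x = e}

/-- `LSet k m` = the set `L_{2k,m}` of lattice paths with `2k` steps and `m` U-steps. -/
def LSet (k m : ℕ) : Set (List Bool) :=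
  {x | x.length = 2*k ∧ x.count true = m}

/-- `d_c(x)`: number of D-steps of `x` starting on the line `y = c`. -/
def dstart (x : List Bool) (c : ℤ) : ℕ :=
  ((List.range x.length).filter (fun i => isD x i && decide (pathHeight x i = c))).length

/-- `u_c(x)`: number of U-steps of `x` starting on the line `y = c`. -/
def ustart (x : List Bool) (c : ℤ) : ℕ :=
  ((List.range x.length).filter (fun i => isU x i && decide (pathHeight x i = c))).length

/-- Positions (in increasing order) of D-steps of `x` touching the line `y = c`
(a D-step at position `i` goes from height `pathHeight x i` down to `pathHeight x i - 1`,
so it touches `y = c` iff its start height is `c` or `c+1`). -/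
def dtouch (x : List Bool) (c : ℤ) : List ℕ :=
  (List.range x.length).filter
    (fun i => isD x i && (decide (pathHeight x i = c) || decide (pathHeight x i = c+1)))

/-- Positions (in increasing order) of U-steps of `x` touching the line `y = c`
(a U-step at position `i` goes from height `pathHeight x i` up to `pathHeight x i + 1`,
so it touches `y = c` iff its start height is `c` or `c-1`). -/
def utouch (x : List Bool) (c : ℤ) : List ℕ :=
  (List.range x.length).filter
    (fun i => isU x i && (decide (pathHeight x i = c) || decide (pathHeight x i = c-1)))

/-- Position (0-indexed) flipped by `g`: the `(d_0(x)+1)`-th D-step touching `y=0`. -/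
def gIdx (x : List Bool) : ℕ := (dtouch x 0).getD (dstart x 0) 0

/-- The map `g`: flip the `(d_0(x)+1)`-th D-step of `x` touching the line `y=0`. -/
def gMap (x : List Bool) : List Bool := x.set (gIdx x) true

/-- Position (0-indexed) flipped by `h`: the `u_1(x)`-th U-step touching `y=1`. -/
def hIdx (x : List Bool) : ℕ := (utouch x 1).getD (ustart x 1 - 1) 0

/-- The map `h`: flip the `u_1(x)`-th U-step of `x` touching the line `y=1`. -/
def hMap (x : List Bool) : List Bool := x.set (hIdx x) false

/-- Position (0-indexed) flipped by `g'`: the `d_0(x)`-th D-step touching `y=0`. -/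
def g'Idx (x : List Bool) : ℕ := (dtouch x 0).getD (dstart x 0 - 1) 0

/-- The map `g'`: flip the `d_0(x)`-th D-step of `x` touching the line `y=0`. -/
def g'Map (x : List Bool) : List Bool := x.set (g'Idx x) true

/-- Position (0-indexed) flipped by `h'`: the `(u_1(x)+1)`-th U-step touching `y=1`. -/
def h'Idx (x : List Bool) : ℕ := (utouch x 1).getD (ustart x 1) 0

/-- The map `h'`: flip the `(u_1(x)+1)`-th U-step of `x` touching the line `y=1`. -/
def h'Map (x : List Bool) : List Bool := x.set (h'Idx x) false

/-- The minimum-change map `f := h ∘ g`. -/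
def fMap (x : List Bool) : List Bool := hMap (gMap x)

/-- `piSeq n x`: the sequence of (1-indexed) positions flipped by the successive
applications `g, h, g, h, ...` over `n` applications of `f` starting from `x`. -/
def piSeq : ℕ → List Bool → List ℕ
  | 0, _ => []
  | n+1, x => (gIdx x + 1) :: (hIdx (gMap x) + 1) :: piSeq n (fMap x)

/-- Reverse the step sequence and complement every step. -/
def revComp (x : List Bool) : List Bool := x.reverse.map (fun b => !b)



/-- count of indices `< n` satisfying `q` -/
abbrev cnt (n : ℕ) (q : ℕ → Bool) : ℕ := ((List.range n).filter q).length

lemma cnt_zero (q : ℕ → Bool) : cnt 0 q = 0 := rfl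

lemma cnt_succ (n : ℕ) (q : ℕ → Bool) :
    cnt (n+1) q = cnt n q + (if q n = true then 1 else 0) := by
  unfold cnt
  rw [List.range_succ, List.filter_append, List.length_append]
  by_cases hq : q n = true <;> simp [hq]

lemma cnt_mono {m n : ℕ} (h : m ≤ n) (q : ℕ → Bool) : cnt m q ≤ cnt n q := by
  induction n, h using Nat.le_induction with
  | base => exact le_rfl
  | succ n hmn ih => rw [cnt_succ]; omega

lemma cnt_le_of_imp {n : ℕ} {q q' : ℕ → Bool} (h : ∀ i, i < n → q i = true → q' i = true) :
    cnt n q ≤ cnt n q' := by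
  induction n with
  | zero => simp [cnt_zero]
  | succ n ih =>
    rw [cnt_succ, cnt_succ]
    have h1 := ih (fun i hi => h i (by omega))
    have h2 := h n (by omega)
    by_cases hq : q n = true
    · simp [hq, h2 hq]; omega
    · simp [hq]; split <;> omega

lemma cnt_congr {n : ℕ} {q q' : ℕ → Bool} (h : ∀ i, i < n → q i = q' i) :
    cnt n q = cnt n q' := by
  have h1 := cnt_le_of_imp (n := n) (q := q) (q' := q') (fun i hi hq => by rw [← h i hi]; exact hq)
  have h2 := cnt_le_of_imp (n := n) (q := q') (q' := q) (fun i hi hq => by rw [h i hi]; exact hq)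
  omega

lemma cnt_congr_seg {m n : ℕ} (hmn : m ≤ n) {q q' : ℕ → Bool}
    (h : ∀ i, m ≤ i → i < n → q i = q' i) :
    cnt n q + cnt m q' = cnt n q' + cnt m q := by
  induction n, hmn using Nat.le_induction with
  | base => omega
  | succ n hmn ih =>
    rw [cnt_succ, cnt_succ]
    have := ih (fun i h1 h2 => h i h1 (by omega))
    rw [h n hmn (by omega)]
    omega

lemma cnt_split {n : ℕ} (a b c : ℕ → Bool) (hdisj : ∀ i, ¬(b i = true ∧ c i = true)) :
    cnt n (fun i => a i && (b i || c i)) = cnt n (fun i => a i && b i) + cnt n (fun i => a i && c i) := by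
  induction n with
  | zero => simp [cnt_zero]
  | succ n ih =>
    rw [cnt_succ, cnt_succ, cnt_succ, ih]
    have := hdisj n
    cases ha : a n <;> cases hb : b n <;> cases hc : c n <;> simp_all <;> omega

lemma getD_filter : ∀ (n : ℕ) (q : ℕ → Bool) (j : ℕ),
    j < ((List.range n).filter q).length →
    ((List.range n).filter q).getD j 0 < n ∧
    q (((List.range n).filter q).getD j 0) = true ∧
    cnt (((List.range n).filter q).getD j 0) q = j := by
  intro n
  induction n with
  | zero => intro q j hj; simp at hj
  | succ n ih =>
    intro q j hj
    rw [List.range_succ, List.filter_append] at hj ⊢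
    by_cases hq : q n = true
    · have hfn : List.filter q [n] = [n] := by simp [hq]
      rw [hfn] at hj ⊢
      rcases Nat.lt_or_ge j ((List.range n).filter q).length with h | h
      · rw [List.getD_append _ _ _ _ h]
        obtain ⟨h1, h2, h3⟩ := ih q j h
        exact ⟨by omega, h2, h3⟩
      · have hj' : j = ((List.range n).filter q).length := by
          simp at hj; omega
        rw [List.getD_append_right _ _ _ _ h, hj']
        simp [hq, cnt]
    · have hfn : List.filter q [n] = [] := by simp [hq]
      rw [hfn, List.append_nil] at hj ⊢
      obtain ⟨h1, h2, h3⟩ := ih q j hj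
      exact ⟨by omega, h2, h3⟩

lemma pathHeight_zero (x : List Bool) : pathHeight x 0 = 0 := rfl

lemma pathHeight_succ (x : List Bool) {i : ℕ} (hi : i < x.length) :
    pathHeight x (i+1) = pathHeight x i + stepVal (x.getD i true) := by
  unfold pathHeight
  rw [List.take_succ, List.getElem?_eq_getElem hi, Option.toList_some, List.map_append,
    List.sum_append, List.map_singleton, List.sum_singleton, List.getD_eq_getElem _ _ hi]

lemma sum_map_stepVal (x : List Bool) :
    (x.map stepVal).sum = 2*(x.count true : ℤ) - x.length := by
  induction x with
  | nil => simp
  | cons b t ih =>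
    cases b <;> simp [stepVal, List.count_cons, ih] <;> push_cast <;> ring

lemma pathHeight_length {x : List Bool} {k : ℕ} (hlen : x.length = 2*k)
    (hcnt : x.count true = k) : pathHeight x x.length = 0 := by
  unfold pathHeight
  rw [List.take_length, sum_map_stepVal, hlen, hcnt]
  push_cast; ring

lemma count_false_eq {x : List Bool} : x.count false + x.count true = x.length := by
  induction x with
  | nil => simp
  | cons b t ih => cases b <;> simp [List.count_cons, ih] <;> omega

lemma cnt_isD (x : List Bool) : ∀ n, n ≤ x.length →
    cnt n (fun i => isD x i) = (x.take n).count false := by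
  intro n
  induction n with
  | zero => simp
  | succ n ih =>
    intro h
    have hn : n < x.length := by omega
    rw [cnt_succ, ih (by omega), List.take_succ, List.getElem?_eq_getElem hn,
      List.count_append]
    simp only [isD, List.getD_eq_getElem _ _ hn]
    cases hx : x[n] <;> simp [hx]

lemma stepVal_true : stepVal true = 1 := rfl
lemma stepVal_false : stepVal false = -1 := rfl

lemma crossing (x : List Bool) (c : ℤ) (m : ℕ) : ∀ n, m ≤ n → n ≤ x.length →
    (cnt n (fun i => isD x i && decide (pathHeight x i = c+1)) : ℤ) +
      (cnt m (fun i => isU x i && decide (pathHeight x i = c)) : ℤ) +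
      (if pathHeight x n > c then 1 else 0) =
    (cnt m (fun i => isD x i && decide (pathHeight x i = c+1)) : ℤ) +
      (cnt n (fun i => isU x i && decide (pathHeight x i = c)) : ℤ) +
      (if pathHeight x m > c then 1 else 0) := by
  intro n
  induction n with
  | zero =>
    intro h1 _
    have : m = 0 := by omega
    subst this; ring
  | succ n ih =>
    intro h1 h2
    rcases Nat.eq_or_lt_of_le h1 with heq | hlt
    · rw [← heq]
    · have hmn : m ≤ n := by omega
      have hn : n < x.length := by omega
      have ihh := ih hmn (by omega)
      have hstep := pathHeight_succ x hn
      rw [cnt_succ n (fun i => isD x i && decide (pathHeight x i = c+1)),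
          cnt_succ n (fun i => isU x i && decide (pathHeight x i = c))]
      cases hb : x.getD n true
      · simp only [isD, isU, hb, Bool.not_false, Bool.true_and, Bool.false_and,
          decide_eq_true_eq, if_false, stepVal] at ihh hstep ⊢
        rw [hstep]
        push_cast
        split_ifs at ihh ⊢ <;> try omega
      · simp only [isD, isU, hb, Bool.not_true, Bool.true_and, Bool.false_and,
          decide_eq_true_eq, if_true, stepVal] at ihh hstep ⊢
        rw [hstep]
        push_cast
        split_ifs at ihh ⊢ <;> try omega

lemma getD_set_self {x : List Bool} {p : ℕ} (hp : p < x.length) :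
    (x.set p true).getD p true = true := by
  rw [List.getD_eq_getElem _ _ (by rw [List.length_set]; exact hp)]
  exact List.getElem_set_self _

lemma getD_set_other {x : List Bool} {p : ℕ} (i : ℕ) (hip : i ≠ p) :
    (x.set p true).getD i true = x.getD i true := by
  by_cases hi : i < x.length
  · rw [List.getD_eq_getElem _ _ (by rw [List.length_set]; exact hi),
      List.getD_eq_getElem _ _ hi]
    exact List.getElem_set_ne (fun h => hip h.symm) _
  · rw [List.getD_eq_default _ _ (by rw [List.length_set]; omega),
      List.getD_eq_default _ _ (by omega)]

lemma pathHeight_set_le {x : List Bool} {p : ℕ} (hp : p < x.length) :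
    ∀ i, i ≤ p → pathHeight (x.set p true) i = pathHeight x i := by
  intro i
  induction i with
  | zero => intro _; rfl
  | succ i ih =>
    intro h
    have hi : i < x.length := by omega
    rw [pathHeight_succ _ (by rw [List.length_set]; exact hi), pathHeight_succ _ hi,
      ih (by omega), getD_set_other i (by omega)]

lemma pathHeight_set_gt {x : List Bool} {p : ℕ} (hp : p < x.length)
    (hxp : x.getD p true = false) :
    ∀ i, p < i → i ≤ x.length → pathHeight (x.set p true) i = pathHeight x i + 2 := by
  intro i
  induction i with
  | zero => omega
  | succ i ih =>
    intro h1 h2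
    have hi : i < x.length := by omega
    rcases Nat.eq_or_lt_of_le (Nat.le_of_lt_succ h1) with heq | hlt
    · subst heq
      rw [pathHeight_succ _ (by rw [List.length_set]; exact hi), pathHeight_succ _ hi,
        pathHeight_set_le hp p le_rfl, getD_set_self hp, hxp]
      rw [stepVal_true, stepVal_false]; ring
    · rw [pathHeight_succ _ (by rw [List.length_set]; exact hi), pathHeight_succ _ hi,
        ih hlt (by omega), getD_set_other i (by omega)]
      ring

/-- the `utouch _ 1` predicate -/
abbrev uT (z : List Bool) : ℕ → Bool :=
  fun i => isU z i && (decide (pathHeight z i = 1) || decide (pathHeight z i = 1-1))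

theorem hg_positions (k : ℕ) (x : List Bool) (hx : x ∈ LSet k k \ DyckSet k k) :
    hIdx (gMap x) < gIdx x ∧
    ∀ i, hIdx (gMap x) < i → i < gIdx x → i ∉ utouch x 1 ∧ i ∉ utouch (gMap x) 1 := by
  obtain ⟨hxL, hxD⟩ := hx
  obtain ⟨hlen, hcnt⟩ := hxL
  have hflaws : flaws x ≠ k := fun hf => hxD ⟨hlen, hcnt, hf⟩
  have hN : pathHeight x x.length = 0 := pathHeight_length hlen hcnt
  have hDk : cnt x.length (fun i => isD x i) = k := by
    rw [cnt_isD x x.length le_rfl, List.take_length]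
    have := count_false_eq (x := x)
    omega
  have hflawsle : flaws x ≤ k := by
    rw [← hDk]
    exact cnt_le_of_imp (fun i _ hq => by
      simp only [Bool.and_eq_true] at hq
      exact hq.1)
  have hex : ∃ i, i < x.length ∧ isD x i = true ∧ 1 ≤ pathHeight x i := by
    by_contra hcon
    push_neg at hcon
    have hle : cnt x.length (fun i => isD x i) ≤
        cnt x.length (fun i => isD x i && decide (pathHeight x i ≤ 0)) := by
      apply cnt_le_of_imp
      intro i hi hq
      have := hcon i hi hq
      simp only [hq, Bool.true_and, decide_eq_true_eq]
      omega
    have hfl : flaws x = cnt x.length (fun i => isD x i && decide (pathHeight x i ≤ 0)) := rfl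
    omega
  obtain ⟨i₀, hi₀n, hi₀D, hi₀h⟩ := hex
  have hD1pos : 1 ≤ cnt x.length (fun i => isD x i && decide (pathHeight x i = 0+1)) := by
    have hc1 := crossing x 0 i₀ x.length (le_of_lt hi₀n) le_rfl
    rw [if_neg (by rw [hN]; norm_num), if_pos (by omega)] at hc1
    have hm1 := cnt_mono (le_of_lt hi₀n) (fun i => isU x i && decide (pathHeight x i = 0))
    have hm2 := cnt_mono (le_of_lt hi₀n) (fun i => isD x i && decide (pathHeight x i = 0+1))
    omega
  have hdisj01 : ∀ i : ℕ, ¬(decide (pathHeight x i = 0) = true ∧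
      decide (pathHeight x i = 0+1) = true) := by
    rintro i ⟨a, b⟩
    simp only [decide_eq_true_eq] at a b
    omega
  have hsplit₁ : cnt x.length (fun i => isD x i &&
        (decide (pathHeight x i = 0) || decide (pathHeight x i = 0+1))) =
      cnt x.length (fun i => isD x i && decide (pathHeight x i = 0)) +
      cnt x.length (fun i => isD x i && decide (pathHeight x i = 0+1)) :=
    cnt_split _ _ _ hdisj01
  have hjlt : dstart x 0 < ((List.range x.length).filter (fun i => isD x i &&
      (decide (pathHeight x i = 0) || decide (pathHeight x i = 0+1)))).length := by
    have hds : dstart x 0 = cnt x.length (fun i => isD x i && decide (pathHeight x i = 0)) := rfl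
    rw [hds]
    calc cnt x.length (fun i => isD x i && decide (pathHeight x i = 0)) <
        cnt x.length (fun i => isD x i && decide (pathHeight x i = 0)) +
        cnt x.length (fun i => isD x i && decide (pathHeight x i = 0+1)) := by omega
    _ = _ := hsplit₁.symm
  obtain ⟨hpn, hpq, hpcnt⟩ := getD_filter x.length _ (dstart x 0) hjlt
  set p : ℕ := ((List.range x.length).filter (fun i => isD x i &&
      (decide (pathHeight x i = 0) || decide (pathHeight x i = 0+1)))).getD (dstart x 0) 0
      with hpdef
  have hgidx : gIdx x = p := rfl
  simp only [Bool.and_eq_true, Bool.or_eq_true, decide_eq_true_eq] at hpq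
  obtain ⟨hpD, hp01⟩ := hpq
  have hxp : x.getD p true = false := by simpa [isD] using hpD
  set y : List Bool := x.set p true with hydef
  have hgmap : gMap x = y := by rw [gMap, hgidx]
  rw [hgmap, hgidx]
  have hyl : y.length = x.length := List.length_set
  have hstep_p : pathHeight x (p+1) = pathHeight x p - 1 := by
    rw [pathHeight_succ x hpn, hxp, stepVal_false]; ring
  have hUtransfer : ∀ i, i ≠ p → isU y i = isU x i := by
    intro i hip
    unfold isU
    exact getD_set_other i hip
  have hHle : ∀ i, i ≤ p → pathHeight y i = pathHeight x i := pathHeight_set_le hpn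
  have hHgt : ∀ i, p < i → i ≤ x.length → pathHeight y i = pathHeight x i + 2 :=
    pathHeight_set_gt hpn hxp
  -- F1
  have hF1 : cnt p (fun i => isD x i && decide (pathHeight x i = 0)) +
      cnt p (fun i => isD x i && decide (pathHeight x i = 0+1)) =
      cnt x.length (fun i => isD x i && decide (pathHeight x i = 0)) := by
    rw [← cnt_split _ _ _ hdisj01]
    exact hpcnt
  -- F2
  have hF2 : cnt (p+1) (fun i => isD x i && decide (pathHeight x i = 0)) =
      cnt p (fun i => isD x i && decide (pathHeight x i = 0)) +
      (if pathHeight x p = 0 then 1 else 0) := by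
    rw [cnt_succ]
    simp only [hpD, Bool.true_and, decide_eq_true_eq]
  -- F3 : crossing c = 0 on [0, p]
  have hF3 := crossing x 0 0 p (Nat.zero_le p) (le_of_lt hpn)
  rw [pathHeight_zero, if_neg (by norm_num : ¬((0:ℤ) > 0))] at hF3
  have hz1 : cnt 0 (fun i => isU x i && decide (pathHeight x i = 0)) = 0 := rfl
  have hz2 : cnt 0 (fun i => isD x i && decide (pathHeight x i = 0+1)) = 0 := rfl
  rw [hz1, hz2] at hF3
  -- F4 : crossing c = -1 on [p+1, x.length]
  have hpred_eq : (fun i => isD x i && decide (pathHeight x i = -1+1)) =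
      (fun i => isD x i && decide (pathHeight x i = 0)) := by
    funext i; norm_num
  have hF4 := crossing x (-1) (p+1) x.length hpn le_rfl
  rw [hpred_eq, if_pos (by rw [hN]; norm_num)] at hF4
  -- F5
  have hu1def : ustart y 1 =
      cnt x.length (fun i => isU y i && decide (pathHeight y i = 1)) := by
    unfold ustart
    rw [hyl]
  have hF5a : cnt p (fun i => isU y i && decide (pathHeight y i = 1)) =
      cnt p (fun i => isU x i && decide (pathHeight x i = 1)) := by
    apply cnt_congr
    intro i hip
    rw [hUtransfer i (by omega), hHle i (le_of_lt hip)]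
  have hyUp : isU y p = true := by
    unfold isU; exact getD_set_self hpn
  have hF5b : cnt (p+1) (fun i => isU y i && decide (pathHeight y i = 1)) =
      cnt p (fun i => isU y i && decide (pathHeight y i = 1)) +
      (if pathHeight x p = 1 then 1 else 0) := by
    rw [cnt_succ]
    simp only [hyUp, Bool.true_and, hHle p le_rfl, decide_eq_true_eq]
  have hF5c : cnt x.length (fun i => isU y i && decide (pathHeight y i = 1)) +
      cnt (p+1) (fun i => isU x i && decide (pathHeight x i = -1)) =
      cnt x.length (fun i => isU x i && decide (pathHeight x i = -1)) +
      cnt (p+1) (fun i => isU y i && decide (pathHeight y i = 1)) := by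
    apply cnt_congr_seg hpn
    intro i h1 h2
    rw [hUtransfer i (by omega), hHgt i (by omega) (by omega)]
    congr 1
    rw [decide_eq_decide]
    omega
  -- F6 : prefix pointwise transfer for the touch predicate
  have huTeq : ∀ i, i < p → uT y i = uT x i := by
    intro i hip
    show (isU y i && _) = (isU x i && _)
    rw [hUtransfer i (by omega), hHle i (le_of_lt hip)]
  have hApre : cnt p (uT y) = cnt p (uT x) := cnt_congr huTeq
  have hsplitr : cnt p (uT x) =
      cnt p (fun i => isU x i && decide (pathHeight x i = 1)) +
      cnt p (fun i => isU x i && decide (pathHeight x i = 1-1)) := by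
    apply cnt_split
    rintro i ⟨a, b⟩
    simp only [decide_eq_true_eq] at a b
    omega
  have hcongr0 : cnt p (fun i => isU x i && decide (pathHeight x i = 1-1)) =
      cnt p (fun i => isU x i && decide (pathHeight x i = 0)) := by
    apply cnt_congr
    intro i _
    norm_num
  have hrp : uT y p = true := by
    show (isU y p && _) = true
    simp only [hyUp, Bool.true_and, hHle p le_rfl, Bool.or_eq_true, decide_eq_true_eq]
    omega
  have hmono1 := cnt_mono (show p+1 ≤ x.length by omega)
      (fun i => isD x i && decide (pathHeight x i = 0))
  have hmono2 := cnt_mono (show p+1 ≤ x.length by omega)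
      (fun i => isU x i && decide (pathHeight x i = -1))
  -- key claim
  have hKey : cnt p (uT y) = ustart y 1 ∧ 1 ≤ ustart y 1 := by
    rw [hu1def, hApre, hsplitr, hcongr0]
    split_ifs at hF2 hF3 hF4 hF5b <;> constructor <;> omega
  -- index bound for hIdx
  have hstep_r : cnt (p+1) (uT y) = cnt p (uT y) + 1 := by
    rw [cnt_succ, hrp]
    simp
  have hmono3 := cnt_mono (show p+1 ≤ x.length by omega) (uT y)
  have hutY : utouch y 1 = (List.range x.length).filter (uT y) := by
    unfold utouch
    rw [hyl]
  have hjlt2 : ustart y 1 - 1 < ((List.range x.length).filter (uT y)).length := by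
    show ustart y 1 - 1 < cnt x.length (uT y)
    omega
  obtain ⟨hhn, hhq, hhcnt⟩ := getD_filter x.length (uT y) (ustart y 1 - 1) hjlt2
  set hidx : ℕ := ((List.range x.length).filter (uT y)).getD (ustart y 1 - 1) 0 with hhdef
  have hhidx : hIdx y = hidx := by
    unfold hIdx
    rw [hutY]
  rw [hhidx]
  have hhlt : hidx < p := by
    by_contra hc
    push_neg at hc
    have := cnt_mono hc (uT y)
    omega
  refine ⟨hhlt, ?_⟩
  intro i h1 h2
  have hcount : ¬ (uT y i = true) := by
    intro hri
    have c1 : cnt (i+1) (uT y) ≤ cnt p (uT y) := cnt_mono (by omega) _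
    have c2 : cnt (i+1) (uT y) = cnt i (uT y) + 1 := by rw [cnt_succ, hri]; simp
    have c3 : cnt (hidx+1) (uT y) ≤ cnt i (uT y) := cnt_mono (by omega) _
    have c4 : cnt (hidx+1) (uT y) = cnt hidx (uT y) + 1 := by rw [cnt_succ, hhq]; simp
    omega
  constructor
  · intro hmem
    have hux : utouch x 1 = (List.range x.length).filter (uT x) := rfl
    rw [hux, List.mem_filter] at hmem
    exact hcount (by rw [huTeq i h2]; exact hmem.2)
  · intro hmem
    rw [hutY, List.mem_filter] at hmem
    exact hcount hmem.2
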